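/- Let (X⁺, T) be a transitive locally compact one-sided countable Markov shift and φ a λ-transient potential with summable variations. Then for every cylinder [b₁,…,b_m], the Green's function x ↦ G(1_{[b₁,…,b_m]}, x | λ) is continuous on X⁺; moreover if x, y agree in their first N coordinates with N > m, then G(1_{[b₁,…,b_m]}, x | λ) = e^{±Σ_{k≥N} Var_k(φ)} G(1_{[b₁,…,b_m]}, y | λ). -/

import Mathlib

open MeasureTheory ENNReal Filter Topology

variable {S : Type*}

/-- The one-sided topological Markov shift over alphabet `S` with transition relation `Adj`. -/
abbrev MShift (Adj : S → S → Prop) : Type _ :=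
  {x : ℕ → S // ∀ i, Adj (x i) (x (i + 1))}

/-- The left shift map. -/
def shiftMap (Adj : S → S → Prop) (x : MShift Adj) : MShift Adj :=
  ⟨fun i => x.1 (i + 1), fun i => x.2 (i + 1)⟩

/-- The Ruelle (transfer) operator on non-negative functions. -/
noncomputable def Ruelle (Adj : S → S → Prop) (φ : MShift Adj → ℝ)
    (f : MShift Adj → ℝ≥0∞) (x : MShift Adj) : ℝ≥0∞ :=
  ∑' y : {y : MShift Adj // shiftMap Adj y = x}, ENNReal.ofReal (Real.exp (φ y.1)) * f y.1

/-- The Green's function `G(f, x | λ) = Σ_n λ⁻ⁿ (L_φⁿ f)(x)`. -/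
noncomputable def Green (Adj : S → S → Prop) (φ : MShift Adj → ℝ) (lam : ℝ)
    (f : MShift Adj → ℝ≥0∞) (x : MShift Adj) : ℝ≥0∞ :=
  ∑' n : ℕ, ENNReal.ofReal ((lam ^ n)⁻¹) * ((Ruelle Adj φ)^[n] f) x

/-- The cylinder set `[a] = {x : x₀ = a}`. -/
def cylA (Adj : S → S → Prop) (a : S) : Set (MShift Adj) := {x | x.1 0 = a}

/-- Indicator function of the cylinder `[a]`. -/
noncomputable def cylInd (Adj : S → S → Prop) (a : S) : MShift Adj → ℝ≥0∞ :=
  (cylA Adj a).indicator 1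

/-- Topological transitivity: every state can be reached from every state. -/
def TransitiveShift (Adj : S → S → Prop) : Prop :=
  ∀ a b : S, ∃ (n : ℕ) (x : MShift Adj), x.1 0 = a ∧ ((shiftMap Adj)^[n] x).1 0 = b

/-- Local compactness: each state has finitely many followers. -/
def LocFin (Adj : S → S → Prop) : Prop := ∀ a : S, {b : S | Adj a b}.Finite

/-- Set of values `|φ(x) − φ(y)|` over pairs agreeing in their first `m` coordinates. -/
def varSet (Adj : S → S → Prop) (φ : MShift Adj → ℝ) (m : ℕ) : Set ℝ :=
  {r | ∃ x y : MShift Adj, (∀ i < m, x.1 i = y.1 i) ∧ r = |φ x - φ y|}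

/-- The `m`-th variation of `φ`. -/
noncomputable def Var (Adj : S → S → Prop) (φ : MShift Adj → ℝ) (m : ℕ) : ℝ :=
  sSup (varSet Adj φ m)

/-- `φ` has summable variations. -/
def SummableVar (Adj : S → S → Prop) (φ : MShift Adj → ℝ) : Prop :=
  (∀ m, BddAbove (varSet Adj φ m)) ∧ Summable (Var Adj φ)

/-- A non-negative real function viewed as `ℝ≥0∞`-valued. -/
noncomputable def ofR {Adj : S → S → Prop} (f : MShift Adj → ℝ) : MShift Adj → ℝ≥0∞ :=
  fun x => ENNReal.ofReal (f x)

/-- `λ`-transience: the Green's function of every cylinder is finite everywhere. -/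
def Transient (Adj : S → S → Prop) (φ : MShift Adj → ℝ) (lam : ℝ) : Prop :=
  ∀ (a : S) (x : MShift Adj), Green Adj φ lam (cylInd Adj a) x ≠ ⊤

/-- The cylinder on a word `w` of length `m`. -/
def cylW (Adj : S → S → Prop) (m : ℕ) (w : Fin m → S) : Set (MShift Adj) :=
  {x | ∀ i : Fin m, x.1 i = w i}

variable {Adj : S → S → Prop} {φ : MShift Adj → ℝ}

lemma shift_iter_apply (n : ℕ) (z : MShift Adj) (j : ℕ) :
    ((shiftMap Adj)^[n] z).1 j = z.1 (n + j) := by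
  induction n generalizing z with
  | zero => simp
  | succ n ih =>
    rw [Function.iterate_succ_apply, ih]
    show z.1 (n + j + 1) = z.1 (n + 1 + j)
    exact congrArg z.1 (by omega)

noncomputable def birk (φ : MShift Adj → ℝ) (n : ℕ) (z : MShift Adj) : ℝ :=
  ∑ i ∈ Finset.range n, φ ((shiftMap Adj)^[i] z)

def preEquiv (n : ℕ) (x : MShift Adj) :
    (Σ y : {y : MShift Adj // shiftMap Adj y = x},
        {z : MShift Adj // (shiftMap Adj)^[n] z = y.1})
      ≃ {z : MShift Adj // (shiftMap Adj)^[n + 1] z = x} where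
  toFun p := ⟨p.2.1, by rw [Function.iterate_succ_apply', p.2.2, p.1.2]⟩
  invFun z := ⟨⟨(shiftMap Adj)^[n] z.1,
    (Function.iterate_succ_apply' (shiftMap Adj) n z.1).symm.trans z.2⟩, ⟨z.1, rfl⟩⟩
  left_inv p := by
    rcases p with ⟨⟨y, hy⟩, ⟨z, hz⟩⟩
    dsimp at hz
    subst hz
    rfl
  right_inv z := rfl

lemma ruelle_iter (f : MShift Adj → ℝ≥0∞) (n : ℕ) (x : MShift Adj) :
    (Ruelle Adj φ)^[n] f x
      = ∑' z : {z : MShift Adj // (shiftMap Adj)^[n] z = x},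
          ENNReal.ofReal (Real.exp (birk φ n z.1)) * f z.1 := by
  induction n generalizing x with
  | zero =>
    simp only [Function.iterate_zero, id_eq]
    rw [tsum_eq_single (⟨x, rfl⟩ : {z : MShift Adj // z = x})
      (fun b hb => absurd (Subtype.ext b.2) hb)]
    simp [birk]
  | succ n ih =>
    rw [Function.iterate_succ_apply']
    show (Ruelle Adj φ) ((Ruelle Adj φ)^[n] f) x = _
    unfold Ruelle
    calc ∑' y : {y : MShift Adj // shiftMap Adj y = x},
          ENNReal.ofReal (Real.exp (φ y.1)) * ((Ruelle Adj φ)^[n] f) y.1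
        = ∑' (y : {y : MShift Adj // shiftMap Adj y = x})
            (z : {z : MShift Adj // (shiftMap Adj)^[n] z = y.1}),
            ENNReal.ofReal (Real.exp (φ y.1)) *
              (ENNReal.ofReal (Real.exp (birk φ n z.1)) * f z.1) := by
          congr 1; funext y; rw [ih, ENNReal.tsum_mul_left]
      _ = ∑' p : (Σ y : {y : MShift Adj // shiftMap Adj y = x},
            {z : MShift Adj // (shiftMap Adj)^[n] z = y.1}),
            ENNReal.ofReal (Real.exp (φ p.1.1)) *
              (ENNReal.ofReal (Real.exp (birk φ n p.2.1)) * f p.2.1) := by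
          rw [ENNReal.tsum_sigma']
      _ = ∑' z : {z : MShift Adj // (shiftMap Adj)^[n + 1] z = x},
            ENNReal.ofReal (Real.exp (birk φ (n + 1) z.1)) * f z.1 := by
          rw [← (preEquiv n x).tsum_eq]
          congr 1; funext p
          simp only [preEquiv, Equiv.coe_fn_mk]
          have : birk φ (n + 1) p.2.1 = birk φ n p.2.1 + φ ((shiftMap Adj)^[n] p.2.1) :=
            Finset.sum_range_succ _ _
          rw [this, p.2.2, Real.exp_add, ENNReal.ofReal_mul (Real.exp_nonneg _)]
          ring

/-! ### Splicing -/

def spliceSeq (n : ℕ) (z y : MShift Adj) : ℕ → S :=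
  fun i => if i < n then z.1 i else y.1 (i - n)

lemma spliceAdj (n : ℕ) {x : MShift Adj} (y : MShift Adj) (h0 : x.1 0 = y.1 0)
    {z : MShift Adj} (hz : (shiftMap Adj)^[n] z = x) (i : ℕ) :
    Adj (spliceSeq n z y i) (spliceSeq n z y (i + 1)) := by
  unfold spliceSeq
  rcases lt_trichotomy (i + 1) n with h | h | h
  · rw [if_pos (by omega), if_pos h]; exact z.2 i
  · rw [if_pos (by omega), if_neg (by omega)]
    have hzn : z.1 n = x.1 0 := by
      have h2 := shift_iter_apply n z 0
      rw [hz] at h2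
      simpa using h2.symm
    have h1 : i + 1 - n = 0 := by omega
    rw [h1, ← h0, ← hzn]
    exact h ▸ z.2 i
  · rw [if_neg (by omega), if_neg (by omega)]
    have h1 : i + 1 - n = (i - n) + 1 := by omega
    rw [h1]; exact y.2 (i - n)

def spliceMap (n : ℕ) {x : MShift Adj} (y : MShift Adj) (h0 : x.1 0 = y.1 0)
    (z : {z : MShift Adj // (shiftMap Adj)^[n] z = x}) :
    {z : MShift Adj // (shiftMap Adj)^[n] z = y} :=
  ⟨⟨spliceSeq n z.1 y, spliceAdj n y h0 z.2⟩, by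
    apply Subtype.ext; funext j
    rw [shift_iter_apply]
    show spliceSeq n z.1 y (n + j) = y.1 j
    unfold spliceSeq
    rw [if_neg (by omega)]
    exact congrArg y.1 (by omega)⟩

lemma coord_of_pre (n : ℕ) {x : MShift Adj} {z : MShift Adj}
    (hz : (shiftMap Adj)^[n] z = x) {i : ℕ} (hi : n ≤ i) : z.1 i = x.1 (i - n) := by
  have h2 := shift_iter_apply n z (i - n)
  rw [hz] at h2
  rw [h2]
  exact congrArg z.1 (by omega)

lemma spliceMap_inj (n : ℕ) {x : MShift Adj} (y : MShift Adj) (h0 : x.1 0 = y.1 0) :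
    Function.Injective (spliceMap (Adj := Adj) n y h0) := by
  intro z1 z2 h
  apply Subtype.ext; apply Subtype.ext; funext i
  by_cases hi : i < n
  · have h2 := congrArg (fun w => w.1.1 i) h
    simpa [spliceMap, spliceSeq, hi] using h2
  · rw [coord_of_pre n z1.2 (by omega), coord_of_pre n z2.2 (by omega)]

lemma spliceMap_agree (n N : ℕ) {x y : MShift Adj} (h0 : x.1 0 = y.1 0)
    (hxy : ∀ i < N, x.1 i = y.1 i)
    (z : {z : MShift Adj // (shiftMap Adj)^[n] z = x}) :
    ∀ i < n + N, z.1.1 i = (spliceMap n y h0 z).1.1 i := by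
  intro i hi
  show z.1.1 i = spliceSeq n z.1 y i
  unfold spliceSeq
  by_cases h : i < n
  · rw [if_pos h]
  · rw [if_neg h, coord_of_pre n z.2 (by omega)]
    exact hxy (i - n) (by omega)


lemma var_nonneg (hb : ∀ m, BddAbove (varSet Adj φ m)) (x0 : MShift Adj) (m : ℕ) :
    0 ≤ Var Adj φ m :=
  le_csSup (hb m) ⟨x0, x0, fun _ _ => rfl, by simp⟩

lemma abs_sub_le_var (hb : ∀ m, BddAbove (varSet Adj φ m)) {m : ℕ} {u v : MShift Adj}
    (h : ∀ i < m, u.1 i = v.1 i) : |φ u - φ v| ≤ Var Adj φ m :=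
  le_csSup (hb m) ⟨u, v, h, rfl⟩

lemma birk_le (hvar : SummableVar Adj φ) (n N : ℕ)
    {z z' : MShift Adj} (hag : ∀ i < n + N, z.1 i = z'.1 i) :
    birk φ n z ≤ (∑' k, Var Adj φ (N + k)) + birk φ n z' := by
  have hsum : Summable (fun k => Var Adj φ (N + k)) := by
    have h2 := (summable_nat_add_iff (f := Var Adj φ) N).2 hvar.2
    simpa [add_comm] using h2
  have hnn : ∀ k, 0 ≤ Var Adj φ (N + k) := fun k => var_nonneg hvar.1 z _
  have step : ∀ i < n, φ ((shiftMap Adj)^[i] z)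
      ≤ Var Adj φ (N + (n - i)) + φ ((shiftMap Adj)^[i] z') := by
    intro i hi
    have hag' : ∀ j < n + N - i, ((shiftMap Adj)^[i] z).1 j = ((shiftMap Adj)^[i] z').1 j := by
      intro j hj
      rw [shift_iter_apply, shift_iter_apply]
      exact hag (i + j) (by omega)
    have h3 := abs_sub_le_var hvar.1 hag'
    have h4 : n + N - i = N + (n - i) := by omega
    rw [h4] at h3
    have h5 := le_abs_self (φ ((shiftMap Adj)^[i] z) - φ ((shiftMap Adj)^[i] z'))
    linarith
  have h1 : birk φ n z ≤ (∑ i ∈ Finset.range n, Var Adj φ (N + (n - i))) + birk φ n z' := by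
    unfold birk
    rw [← Finset.sum_add_distrib]
    exact Finset.sum_le_sum fun i hi => step i (Finset.mem_range.1 hi)
  refine h1.trans (add_le_add ?_ le_rfl)
  have e : ∑ i ∈ Finset.range n, Var Adj φ (N + (n - i))
      = ∑ j ∈ Finset.range n, Var Adj φ (N + (j + 1)) := by
    rw [← Finset.sum_range_reflect (fun j => Var Adj φ (N + (j + 1))) n]
    exact Finset.sum_congr rfl fun j hj =>
      congrArg (Var Adj φ) (by have := Finset.mem_range.1 hj; omega)
  rw [e]
  calc ∑ j ∈ Finset.range n, Var Adj φ (N + (j + 1))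
      ≤ ∑ k ∈ Finset.range (n + 1), Var Adj φ (N + k) := by
        rw [Finset.sum_range_succ']
        exact le_add_of_nonneg_right (hnn 0)
    _ ≤ ∑' k, Var Adj φ (N + k) := Summable.sum_le_tsum _ (fun k _ => hnn k) hsum

lemma ruelle_iter_bound (hvar : SummableVar Adj φ) (m : ℕ) (w : Fin m → S)
    {N : ℕ} (hmN : m < N) {x y : MShift Adj} (hxy : ∀ i < N, x.1 i = y.1 i) (n : ℕ) :
    (Ruelle Adj φ)^[n] ((cylW Adj m w).indicator 1) x
      ≤ ENNReal.ofReal (Real.exp (∑' k, Var Adj φ (N + k))) *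
        (Ruelle Adj φ)^[n] ((cylW Adj m w).indicator 1) y := by
  set f := (cylW Adj m w).indicator (1 : MShift Adj → ℝ≥0∞) with hf
  set C := ENNReal.ofReal (Real.exp (∑' k, Var Adj φ (N + k))) with hC
  have h0 : x.1 0 = y.1 0 := hxy 0 (by omega)
  rw [ruelle_iter, ruelle_iter, ← ENNReal.tsum_mul_left]
  set g : {z : MShift Adj // (shiftMap Adj)^[n] z = y} → ℝ≥0∞ :=
    fun z => C * (ENNReal.ofReal (Real.exp (birk φ n z.1)) * f z.1) with hg
  calc ∑' z : {z : MShift Adj // (shiftMap Adj)^[n] z = x},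
        ENNReal.ofReal (Real.exp (birk φ n z.1)) * f z.1
      ≤ ∑' z : {z : MShift Adj // (shiftMap Adj)^[n] z = x}, g (spliceMap n y h0 z) := by
        apply ENNReal.tsum_le_tsum
        intro z
        have hag := spliceMap_agree n N h0 hxy z
        have hfeq : f z.1 = f (spliceMap n y h0 z).1 := by
          have hmem : z.1 ∈ cylW Adj m w ↔ (spliceMap n y h0 z).1 ∈ cylW Adj m w := by
            constructor <;> intro h i
            · rw [← hag i.1 (by have := i.2; omega)]; exact h i
            · rw [hag i.1 (by have := i.2; omega)]; exact h i
          by_cases hz : z.1 ∈ cylW Adj m w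
          · rw [hf]; rw [Set.indicator_of_mem hz, Set.indicator_of_mem (hmem.1 hz)]; rfl
          · rw [hf]; rw [Set.indicator_of_notMem hz,
              Set.indicator_of_notMem (fun hc => hz (hmem.2 hc))]
        have hbb : birk φ n z.1 ≤ (∑' k, Var Adj φ (N + k)) + birk φ n (spliceMap n y h0 z).1 :=
          birk_le hvar n N hag
        rw [hg]
        dsimp only
        rw [← mul_assoc, ← hfeq]
        apply mul_le_mul_left
        rw [hC, ← ENNReal.ofReal_mul (Real.exp_nonneg _), ← Real.exp_add]
        exact ENNReal.ofReal_le_ofReal (Real.exp_le_exp.2 hbb)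
    _ ≤ ∑' z' : {z : MShift Adj // (shiftMap Adj)^[n] z = y}, g z' :=
        ENNReal.tsum_comp_le_tsum_of_injective (spliceMap_inj n y h0) g

lemma green_bound (hvar : SummableVar Adj φ) {lam : ℝ} (m : ℕ) (w : Fin m → S)
    {N : ℕ} (hmN : m < N) {x y : MShift Adj} (hxy : ∀ i < N, x.1 i = y.1 i) :
    Green Adj φ lam ((cylW Adj m w).indicator 1) x
      ≤ ENNReal.ofReal (Real.exp (∑' k, Var Adj φ (N + k))) *
        Green Adj φ lam ((cylW Adj m w).indicator 1) y := by
  unfold Green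
  rw [← ENNReal.tsum_mul_left]
  apply ENNReal.tsum_le_tsum
  intro n
  calc ENNReal.ofReal ((lam ^ n)⁻¹) * ((Ruelle Adj φ)^[n] ((cylW Adj m w).indicator 1)) x
      ≤ ENNReal.ofReal ((lam ^ n)⁻¹) *
          (ENNReal.ofReal (Real.exp (∑' k, Var Adj φ (N + k))) *
            ((Ruelle Adj φ)^[n] ((cylW Adj m w).indicator 1)) y) :=
        mul_le_mul_right (ruelle_iter_bound hvar m w hmN hxy n) _
    _ = ENNReal.ofReal (Real.exp (∑' k, Var Adj φ (N + k))) *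
          (ENNReal.ofReal ((lam ^ n)⁻¹) *
            ((Ruelle Adj φ)^[n] ((cylW Adj m w).indicator 1)) y) := by
        rw [mul_left_comm]

lemma cyl_nhds [TopologicalSpace S] [DiscreteTopology S] (x : MShift Adj) (N : ℕ) :
    {y : MShift Adj | ∀ i < N, x.1 i = y.1 i} ∈ 𝓝 x := by
  have heq : {y : MShift Adj | ∀ i < N, x.1 i = y.1 i}
      = ⋂ i ∈ Finset.range N, (fun y : MShift Adj => y.1 i) ⁻¹' {x.1 i} := by
    ext y
    simp only [Set.mem_setOf_eq, Set.mem_iInter, Set.mem_preimage, Set.mem_singleton_iff,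
      Finset.mem_range]
    exact ⟨fun h i hi => (h i hi).symm, fun h i hi => (h i hi).symm⟩
  have hopen : IsOpen {y : MShift Adj | ∀ i < N, x.1 i = y.1 i} := by
    rw [heq]
    exact isOpen_biInter_finset fun i _ =>
      (isOpen_discrete _).preimage ((continuous_apply i).comp continuous_subtype_val)
  exact hopen.mem_nhds fun i _ => rfl

/-- The Green's function of a word cylinder is continuous, and satisfies the distortion
bound `G(1_w, x|λ) = e^{±Σ_{k ≥ N} Var_k(φ)} G(1_w, y|λ)` whenever `x, y` agree in their
first `N > m` coordinates. -/
theorem green_cylinder_continuous [Countable S] [TopologicalSpace S] [DiscreteTopology S]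
    (Adj : S → S → Prop) (htrans : TransitiveShift Adj) (hloc : LocFin Adj)
    (φ : MShift Adj → ℝ) (hvar : SummableVar Adj φ) (lam : ℝ) (hlam : 0 < lam)
    (htransient : Transient Adj φ lam) (m : ℕ) (w : Fin m → S) :
    Continuous (fun x => Green Adj φ lam ((cylW Adj m w).indicator 1) x) ∧
    ∀ N : ℕ, m < N → ∀ x y : MShift Adj, (∀ i < N, x.1 i = y.1 i) →
      Green Adj φ lam ((cylW Adj m w).indicator 1) x
          ≤ ENNReal.ofReal (Real.exp (∑' k : ℕ, Var Adj φ (N + k))) *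
            Green Adj φ lam ((cylW Adj m w).indicator 1) y ∧
      Green Adj φ lam ((cylW Adj m w).indicator 1) y
          ≤ ENNReal.ofReal (Real.exp (∑' k : ℕ, Var Adj φ (N + k))) *
            Green Adj φ lam ((cylW Adj m w).indicator 1) x := by
  have key : ∀ N : ℕ, m < N → ∀ x y : MShift Adj, (∀ i < N, x.1 i = y.1 i) →
      Green Adj φ lam ((cylW Adj m w).indicator 1) x
          ≤ ENNReal.ofReal (Real.exp (∑' k : ℕ, Var Adj φ (N + k))) *
            Green Adj φ lam ((cylW Adj m w).indicator 1) y ∧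
      Green Adj φ lam ((cylW Adj m w).indicator 1) y
          ≤ ENNReal.ofReal (Real.exp (∑' k : ℕ, Var Adj φ (N + k))) *
            Green Adj φ lam ((cylW Adj m w).indicator 1) x :=
    fun N hmN x y hxy =>
      ⟨green_bound hvar m w hmN hxy, green_bound hvar m w hmN fun i hi => (hxy i hi).symm⟩
  refine ⟨?_, key⟩
  set G := fun x => Green Adj φ lam ((cylW Adj m w).indicator 1) x with hG
  rw [continuous_iff_continuousAt]
  intro x
  by_cases hx : G x = ⊤
  · have hev : ∀ᶠ y in 𝓝 x, G y = ⊤ := by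
      filter_upwards [cyl_nhds x (m + 1)] with y hy
      by_contra hne
      have hb := (key (m + 1) (lt_add_one m) x y hy).1
      exact (ne_top_of_le_ne_top (ENNReal.mul_ne_top ENNReal.ofReal_ne_top hne) hb) hx
    show Tendsto G (𝓝 x) (𝓝 (G x))
    rw [hx]
    exact Filter.Tendsto.congr' (hev.mono fun y hy => hy.symm) tendsto_const_nhds
  · show Tendsto G (𝓝 x) (𝓝 (G x))
    rw [ENNReal.tendsto_nhds hx]
    intro ε hε
    set c : ℕ → ℝ := fun N => ∑' k, Var Adj φ (N + k) with hc
    have hc0 : Tendsto c atTop (𝓝 0) := by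
      have h1 := tendsto_sum_nat_add (Var Adj φ)
      have h2 : c = fun N => ∑' k, Var Adj φ (k + N) := by
        funext N; exact tsum_congr fun k => congrArg _ (add_comm N k)
      rw [h2]; exact h1
    have hC : Tendsto (fun N => ENNReal.ofReal (Real.exp (c N))) atTop (𝓝 1) := by
      have h2 : Tendsto (fun N => Real.exp (c N)) atTop (𝓝 1) := by
        have := (Real.continuous_exp.tendsto 0).comp hc0
        simpa [Function.comp_def] using this
      have := (ENNReal.continuous_ofReal.tendsto 1).comp h2
      simpa [Function.comp_def] using this
    have hCmul : Tendsto (fun N => ENNReal.ofReal (Real.exp (c N)) * G x) atTop (𝓝 (G x)) := by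
      have := ENNReal.Tendsto.mul_const hC (b := G x) (Or.inl one_ne_zero)
      simpa using this
    have hCinv : Tendsto (fun N => (ENNReal.ofReal (Real.exp (c N)))⁻¹ * G x) atTop (𝓝 (G x)) := by
      have h3 : Tendsto (fun N => (ENNReal.ofReal (Real.exp (c N)))⁻¹) atTop (𝓝 1) := by
        have := hC.inv; simpa using this
      have := ENNReal.Tendsto.mul_const h3 (b := G x) (Or.inl one_ne_zero)
      simpa using this
    have hub : ∀ᶠ N in atTop, ENNReal.ofReal (Real.exp (c N)) * G x ≤ G x + ε :=
      (hCmul.eventually_lt_const (ENNReal.lt_add_right hx (ne_of_gt hε))).mono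
        fun N hN => le_of_lt hN
    have hlb : ∀ᶠ N in atTop, G x - ε ≤ (ENNReal.ofReal (Real.exp (c N)))⁻¹ * G x := by
      rcases eq_or_ne (G x - ε) 0 with h4 | h4
      · exact Eventually.of_forall fun N => by rw [h4]; exact zero_le
      · have h5 : G x - ε < G x := by
          apply ENNReal.sub_lt_self hx
          · intro h6; rw [h6] at h4; exact h4 (zero_tsub ε)
          · exact ne_of_gt hε
        exact (hCinv.eventually_const_lt h5).mono fun N hN => le_of_lt hN
    obtain ⟨N, ⟨hu, hl⟩, hmN⟩ := ((hub.and hlb).and (eventually_gt_atTop m)).exists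
    filter_upwards [cyl_nhds x N] with y hy
    have hk := key N hmN x y hy
    constructor
    · calc G x - ε ≤ (ENNReal.ofReal (Real.exp (c N)))⁻¹ * G x := hl
        _ ≤ (ENNReal.ofReal (Real.exp (c N)))⁻¹ * (ENNReal.ofReal (Real.exp (c N)) * G y) :=
            mul_le_mul_right hk.1 _
        _ = G y := by
            rw [← mul_assoc, ENNReal.inv_mul_cancel
              (ne_of_gt (ENNReal.ofReal_pos.2 (Real.exp_pos _))) ENNReal.ofReal_ne_top, one_mul]
    · calc G y ≤ ENNReal.ofReal (Real.exp (c N)) * G x := hk.2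
        _ ≤ G x + ε := hu
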